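/- The rational function T(x₁,x₂) = (x₁²x₂ + x₁x₂² + x₁² + x₂² + 2x₁ + 2x₂ + 1)/(x₁x₂) satisfies T((x₂+1)/x₁, x₂) = T(x₁,x₂) and T(x₁, (x₁+1)/x₂) = T(x₁,x₂), as identities of rational functions. -/

import Mathlib

open MvPolynomial

/-- The field of rational functions `ℚ(x₁, x₂)`. -/
noncomputable abbrev QF := FractionRing (MvPolynomial (Fin 2) ℚ)

noncomputable def x₁ : QF := algebraMap (MvPolynomial (Fin 2) ℚ) QF (X 0)
noncomputable def x₂ : QF := algebraMap (MvPolynomial (Fin 2) ℚ) QF (X 1)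

/-- The mutation invariant of type `A₂`. -/
noncomputable def T (a b : QF) : QF :=
  (a ^ 2 * b + a * b ^ 2 + a ^ 2 + b ^ 2 + 2 * a + 2 * b + 1) / (a * b)

lemma map_ne_zero' {p : MvPolynomial (Fin 2) ℚ} (hp : p ≠ 0) :
    algebraMap (MvPolynomial (Fin 2) ℚ) QF p ≠ 0 := by
  intro h
  exact hp (IsFractionRing.injective (MvPolynomial (Fin 2) ℚ) QF (by simpa using h))

lemma hx1 : x₁ ≠ 0 := map_ne_zero' (X_ne_zero 0)
lemma hx2 : x₂ ≠ 0 := map_ne_zero' (X_ne_zero 1)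

lemma hx2' : x₂ + 1 ≠ 0 := by
  have : x₂ + 1 = algebraMap (MvPolynomial (Fin 2) ℚ) QF (X 1 + 1) := by
    simp [x₂]
  rw [this]
  apply map_ne_zero'
  intro h
  have := congrArg (MvPolynomial.eval (fun _ => (0:ℚ))) h
  simp at this

lemma hx1' : x₁ + 1 ≠ 0 := by
  have : x₁ + 1 = algebraMap (MvPolynomial (Fin 2) ℚ) QF (X 0 + 1) := by
    simp [x₁]
  rw [this]
  apply map_ne_zero'
  intro h
  have := congrArg (MvPolynomial.eval (fun _ => (0:ℚ))) h
  simp at this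

set_option maxHeartbeats 2000000 in
/-- `T` is invariant under the type `A₂` mutations
`μ₁(x₁,x₂) = ((x₂+1)/x₁, x₂)` and `μ₂(x₁,x₂) = (x₁, (x₁+1)/x₂)`. -/
theorem stmt_3 :
    T ((x₂ + 1) / x₁) x₂ = T x₁ x₂ ∧ T x₁ ((x₁ + 1) / x₂) = T x₁ x₂ := by
  have d1 : (x₂ + 1) / x₁ * x₂ ≠ 0 := mul_ne_zero (div_ne_zero hx2' hx1) hx2
  have d2 : x₁ * ((x₁ + 1) / x₂) ≠ 0 := mul_ne_zero hx1 (div_ne_zero hx1' hx2)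
  have d : x₁ * x₂ ≠ 0 := mul_ne_zero hx1 hx2
  have h1 := hx1; have h2 := hx2
  constructor
  · rw [T, T, div_eq_div_iff d1 d]
    field_simp
    repeat rw [div_add' _ _ _ (by simp [h1, h2])]
    ring
  · rw [T, T, div_eq_div_iff d2 d]
    field_simp
    repeat rw [div_add' _ _ _ (by simp [h1, h2])]
    ring
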